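/- Let N ≥ 2 and let f : ℂᴺ → ℝ satisfy f(e^{iθ} ξ A) = f(ξ) for all ξ ∈ ℂᴺ, all θ ∈ ℝ and all A ∈ O(N,ℝ). Then for any ξ, η ∈ ℂᴺ: if Σ_j |ξ_j|² = Σ_j |η_j|² and |Σ_j ξ_j²| = |Σ_j η_j²|, then f(ξ) = f(η). In particular, f(ξ) depends only on r = Σ_j |ξ_j|² and |Σ_j ξ_j²|. -/

import Mathlib

open Matrix

lemma aux_exists_ortho {N : ℕ} {v : Fin N → EuclideanSpace ℝ (Fin N)} {s : Set (Fin N)}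
    (hv : Orthonormal ℝ (s.restrict v)) :
    ∃ A ∈ Matrix.orthogonalGroup (Fin N) ℝ,
      ∀ i ∈ s, ∀ j, (∑ k, v i k * A k j) = if j = i then 1 else 0 := by
  obtain ⟨b, hb⟩ := hv.exists_orthonormalBasis_extension_of_card_eq (by simp)
  have hinner : ∀ i j : Fin N, (∑ k, b i k * b j k) = if i = j then 1 else 0 := by
    have hob := b.orthonormal
    rw [orthonormal_iff_ite] at hob
    intro i j
    have h := hob j i
    simpa [PiLp.inner_apply, RCLike.inner_apply, eq_comm] using h
  refine ⟨Matrix.of fun k j => b j k, (Matrix.mem_orthogonalGroup_iff' (Fin N) ℝ).2 ?_, ?_⟩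
  · ext j j'
    have h := hinner j j'
    simp only [Matrix.mul_apply, Matrix.star_apply, Matrix.one_apply, Matrix.of_apply, star_trivial]
    simpa using h
  · intro i hi j
    have h := hinner i j
    rw [← hb i hi]
    simpa [eq_comm] using h

lemma aux_single {N : ℕ} (v : EuclideanSpace ℝ (Fin N)) (hv : ‖v‖ = 1) (p : Fin N) :
    ∃ A ∈ Matrix.orthogonalGroup (Fin N) ℝ,
      ∀ j, (∑ k, v k * A k j) = if j = p then 1 else 0 := by
  have hsum : ∀ w : EuclideanSpace ℝ (Fin N), (∑ k, w k * w k) = ‖w‖ * ‖w‖ := fun w => by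
    rw [← real_inner_self_eq_norm_mul_norm]
    simp only [PiLp.inner_apply, RCLike.inner_apply, conj_trivial, mul_comm]
  have horth : Orthonormal ℝ (({p} : Set (Fin N)).restrict (fun _ => v)) := by
    rw [orthonormal_iff_ite]
    rintro ⟨i, hi⟩ ⟨j, hj⟩
    simp only [Set.mem_singleton_iff] at hi hj
    subst hi; subst hj
    simp only [Set.restrict]
    simp only [PiLp.inner_apply, RCLike.inner_apply, starRingEnd_apply, star_trivial]
    change (∑ k, v k * v k) = _; rw [hsum v, hv, one_mul]
    simp
  obtain ⟨A, hA, h⟩ := aux_exists_ortho horth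
  exact ⟨A, hA, h p rfl⟩

lemma aux_pair {N : ℕ} (x y : EuclideanSpace ℝ (Fin N)) (p q : Fin N) (hpq : p ≠ q)
    (hxy : (inner ℝ x y : ℝ) = 0) :
    ∃ A ∈ Matrix.orthogonalGroup (Fin N) ℝ,
      (∀ j, (∑ k, x k * A k j) = if j = p then ‖x‖ else 0) ∧
      (∀ j, (∑ k, y k * A k j) = if j = q then ‖y‖ else 0) := by
  have hsum : ∀ w : EuclideanSpace ℝ (Fin N), (∑ k, w k * w k) = ‖w‖ * ‖w‖ := fun w => by
    rw [← real_inner_self_eq_norm_mul_norm]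
    simp only [PiLp.inner_apply, RCLike.inner_apply, conj_trivial, mul_comm]
  by_cases hx : x = 0
  · by_cases hy : y = 0
    · exact ⟨1, one_mem _, by simp [hx], by simp [hy]⟩
    · obtain ⟨A, hA, h⟩ := aux_single (‖y‖⁻¹ • y) (by
        simp [norm_smul, inv_mul_cancel₀ (norm_ne_zero_iff.2 hy)]) q
      refine ⟨A, hA, by simp [hx], fun j => ?_⟩
      have h' := h j
      have hyk : ∀ k, (‖y‖⁻¹ • y) k = ‖y‖⁻¹ * y k := fun k => rfl
      simp only [hyk] at h'
      have := congrArg (fun t => ‖y‖ * t) h'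
      simp only [Finset.mul_sum, ← mul_assoc, mul_inv_cancel₀ (norm_ne_zero_iff.2 hy),
        one_mul] at this
      rw [this]
      split <;> simp
  · by_cases hy : y = 0
    · obtain ⟨A, hA, h⟩ := aux_single (‖x‖⁻¹ • x) (by
        simp [norm_smul, inv_mul_cancel₀ (norm_ne_zero_iff.2 hx)]) p
      refine ⟨A, hA, fun j => ?_, by simp [hy]⟩
      have h' := h j
      have hxk : ∀ k, (‖x‖⁻¹ • x) k = ‖x‖⁻¹ * x k := fun k => rfl
      simp only [hxk] at h'
      have := congrArg (fun t => ‖x‖ * t) h'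
      simp only [Finset.mul_sum, ← mul_assoc, mul_inv_cancel₀ (norm_ne_zero_iff.2 hx),
        one_mul] at this
      rw [this]
      split <;> simp
    · set v : Fin N → EuclideanSpace ℝ (Fin N) :=
        fun i => if i = p then ‖x‖⁻¹ • x else if i = q then ‖y‖⁻¹ • y else 0 with hvdef
      have hnx : ‖x‖ ≠ 0 := norm_ne_zero_iff.2 hx
      have hny : ‖y‖ ≠ 0 := norm_ne_zero_iff.2 hy
      have horth : Orthonormal ℝ (({p, q} : Set (Fin N)).restrict v) := by
        rw [orthonormal_iff_ite]
        rintro ⟨i, hi⟩ ⟨j, hj⟩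
        simp only [Set.mem_insert_iff, Set.mem_singleton_iff] at hi hj
        have hinner_sym : (inner ℝ y x : ℝ) = 0 := by rwa [real_inner_comm]
        rcases hi with rfl | rfl <;> rcases hj with rfl | rfl <;>
          simp [Set.restrict, hvdef, hpq, hpq.symm, Subtype.ext_iff,
            inner_smul_left, inner_smul_right, real_inner_self_eq_norm_sq, hxy, hinner_sym,
            inv_mul_cancel₀ hnx, inv_mul_cancel₀ hny] <;>
          simp [norm_smul, hnx, hny]
      obtain ⟨A, hA, h⟩ := aux_exists_ortho horth
      have hp : v p = ‖x‖⁻¹ • x := by simp [hvdef]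
      have hq : v q = ‖y‖⁻¹ • y := by simp [hvdef, hpq.symm]
      refine ⟨A, hA, fun j => ?_, fun j => ?_⟩
      · have h' := h p (by simp) j
        rw [hp] at h'
        have hxk : ∀ k, (‖x‖⁻¹ • x) k = ‖x‖⁻¹ * x k := fun k => rfl
        simp only [hxk] at h'
        have := congrArg (fun t => ‖x‖ * t) h'
        simp only [Finset.mul_sum, ← mul_assoc, mul_inv_cancel₀ hnx, one_mul] at this
        rw [this]; split <;> simp
      · have h' := h q (by simp) j
        rw [hq] at h'
        have hyk : ∀ k, (‖y‖⁻¹ • y) k = ‖y‖⁻¹ * y k := fun k => rfl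
        simp only [hyk] at h'
        have := congrArg (fun t => ‖y‖ * t) h'
        simp only [Finset.mul_sum, ← mul_assoc, mul_inv_cancel₀ hny, one_mul] at this
        rw [this]; split <;> simp

lemma aux_canonical {N : ℕ}
    (f : (Fin N → ℂ) → ℝ)
    (hinv : ∀ ξ : Fin N → ℂ, ∀ θ : ℝ, ∀ A ∈ Matrix.orthogonalGroup (Fin N) ℝ,
      f (fun j => Complex.exp (θ * Complex.I) *
        Matrix.vecMul ξ (A.map (Complex.ofReal)) j) = f ξ)
    (i0 i1 : Fin N) (h01 : i0 ≠ i1) (ξ : Fin N → ℂ) :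
    f ξ = f (fun j =>
      if j = i0 then
        ((Real.sqrt ((∑ j, ‖ξ j‖ ^ 2 + ‖∑ j, ξ j ^ 2‖) / 2) : ℝ) : ℂ)
      else if j = i1 then
        ((Real.sqrt ((∑ j, ‖ξ j‖ ^ 2 - ‖∑ j, ξ j ^ 2‖) / 2) : ℝ) : ℂ)
          * Complex.I
      else 0) := by
  set z : ℂ := ∑ j, ξ j ^ 2 with hz
  set r : ℝ := ∑ j, ‖ξ j‖ ^ 2 with hrdef
  set s : ℝ := ‖z‖ with hsdef
  set θ : ℝ := -(z.arg) / 2 with hθ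
  set ξ' : Fin N → ℂ := fun j => Complex.exp (θ * Complex.I) * ξ j with hξ'
  -- step 1 : f ξ' = f ξ
  have step1 : f ξ' = f ξ := by
    have h := hinv ξ θ 1 (one_mem _)
    have h1 : ((1 : Matrix (Fin N) (Fin N) ℝ).map (Complex.ofReal)) = 1 :=
      Matrix.map_one _ Complex.ofReal_zero Complex.ofReal_one
    rw [h1] at h
    simpa [Matrix.vecMul_one] using h
  -- e^{iθ}^2 * z = s
  have hexp2 : Complex.exp (θ * Complex.I) ^ 2 = Complex.exp (-(z.arg : ℂ) * Complex.I) := by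
    rw [sq, ← Complex.exp_add]
    congr 1
    rw [hθ]
    push_cast
    ring
  have h2 : (∑ j, ξ' j ^ 2) = (s : ℂ) := by
    have e1 : (∑ j, ξ' j ^ 2) = Complex.exp (θ * Complex.I) ^ 2 * z := by
      rw [hξ', hz, Finset.mul_sum]
      exact Finset.sum_congr rfl fun j _ => by ring
    rw [e1, hexp2]
    nth_rewrite 2 [show z = (s : ℂ) * Complex.exp ((z.arg:ℂ) * Complex.I) from by
      rw [hsdef]; exact (Complex.norm_mul_exp_arg_mul_I z).symm]
    rw [show Complex.exp (-(z.arg:ℂ) * Complex.I) *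
        ((s : ℂ) * Complex.exp ((z.arg:ℂ) * Complex.I))
        = (s : ℂ) * Complex.exp ((z.arg:ℂ) * Complex.I + -(z.arg:ℂ) * Complex.I)
      from by rw [Complex.exp_add]; ring]
    simp
  -- real and imaginary parts
  set x : EuclideanSpace ℝ (Fin N) := WithLp.toLp 2 (fun j => (ξ' j).re) with hxdef
  set y : EuclideanSpace ℝ (Fin N) := WithLp.toLp 2 (fun j => (ξ' j).im) with hydef
  have him : ∑ j, x j * y j = 0 := by
    have h := congrArg Complex.im h2
    simp only [Complex.im_sum, sq, Complex.mul_im, Complex.ofReal_im] at h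
    have h' : ∑ j, ((ξ' j).re * (ξ' j).im + (ξ' j).im * (ξ' j).re) = 0 := h
    rw [show ∑ j, ((ξ' j).re * (ξ' j).im + (ξ' j).im * (ξ' j).re)
        = 2 * ∑ j, (ξ' j).re * (ξ' j).im from by
      rw [Finset.mul_sum]; exact Finset.sum_congr rfl fun j _ => by ring] at h'
    have : ∑ j, (ξ' j).re * (ξ' j).im = 0 := by linarith
    exact this
  have hre : ∑ j, (x j ^ 2 - y j ^ 2) = s := by
    have h := congrArg Complex.re h2
    simp only [Complex.re_sum, sq, Complex.mul_re, Complex.ofReal_re] at h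
    rw [show (∑ j, (x j * x j - y j * y j)) = ∑ j, ((ξ' j).re * (ξ' j).re - (ξ' j).im * (ξ' j).im)
      from rfl] at *
    convert h using 2 with j
    ring
  have hr' : ∑ j, (x j ^ 2 + y j ^ 2) = r := by
    have habs : ∀ j, ‖ξ' j‖ = ‖ξ j‖ := by
      intro j
      rw [hξ']
      simp [Complex.norm_exp_ofReal_mul_I]
    rw [hrdef]
    refine Finset.sum_congr rfl fun j _ => ?_
    rw [← habs j, Complex.sq_norm, Complex.normSq_apply]
    simp [hxdef, hydef]
    ring
  have hX2 : ∑ j, x j ^ 2 = (r + s) / 2 := by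
    have e1 : ∑ j, (x j ^ 2 - y j ^ 2) + ∑ j, (x j ^ 2 + y j ^ 2) = 2 * ∑ j, x j ^ 2 := by
      rw [← Finset.sum_add_distrib, Finset.mul_sum]
      exact Finset.sum_congr rfl fun j _ => by ring
    linarith
  have hY2 : ∑ j, y j ^ 2 = (r - s) / 2 := by
    have e1 : ∑ j, (x j ^ 2 + y j ^ 2) - ∑ j, (x j ^ 2 - y j ^ 2) = 2 * ∑ j, y j ^ 2 := by
      rw [← Finset.sum_sub_distrib, Finset.mul_sum]
      exact Finset.sum_congr rfl fun j _ => by ring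
    linarith
  have hnX : ‖x‖ = Real.sqrt ((r + s) / 2) := by
    rw [EuclideanSpace.norm_eq, ← hX2]
    congr 1
    exact Finset.sum_congr rfl fun j _ => by rw [Real.norm_eq_abs, sq_abs]
  have hnY : ‖y‖ = Real.sqrt ((r - s) / 2) := by
    rw [EuclideanSpace.norm_eq, ← hY2]
    congr 1
    exact Finset.sum_congr rfl fun j _ => by rw [Real.norm_eq_abs, sq_abs]
  have hinner0 : (inner ℝ x y : ℝ) = 0 := by
    simpa [PiLp.inner_apply, RCLike.inner_apply, mul_comm] using him
  obtain ⟨A, hA, hxA, hyA⟩ := aux_pair x y i0 i1 h01 hinner0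
  have hmain := hinv ξ' 0 A hA
  have hvec : (fun j => Complex.exp ((0:ℝ) * Complex.I) *
      Matrix.vecMul ξ' (A.map Complex.ofReal) j) = (fun j =>
      if j = i0 then ((Real.sqrt ((r + s) / 2) : ℝ) : ℂ)
      else if j = i1 then ((Real.sqrt ((r - s) / 2) : ℝ) : ℂ) * Complex.I
      else 0) := by
    funext j
    simp only [Complex.ofReal_zero, zero_mul, Complex.exp_zero, one_mul]
    rw [show Matrix.vecMul ξ' (A.map Complex.ofReal) j = ∑ k, ξ' k * (A k j : ℂ) from by
      simp [Matrix.vecMul, dotProduct, Matrix.map_apply]]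
    have hterm : ∀ k, ξ' k * (A k j : ℂ)
        = ((x k * A k j : ℝ) : ℂ) + ((y k * A k j : ℝ) : ℂ) * Complex.I := by
      intro k
      have hxk : x k = (ξ' k).re := rfl
      have hyk : y k = (ξ' k).im := rfl
      apply Complex.ext <;>
        simp [Complex.mul_re, Complex.mul_im, Complex.add_re, Complex.add_im, hxk, hyk]
    rw [Finset.sum_congr rfl fun k _ => hterm k, Finset.sum_add_distrib, ← Finset.sum_mul,
      ← Complex.ofReal_sum, ← Complex.ofReal_sum, hxA j, hyA j]
    by_cases hj0 : j = i0
    · simp [hj0, h01, hnX]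
    · by_cases hj1 : j = i1
      · simp [hj0, hj1, hnY, Ne.symm h01]
      · simp [hj0, hj1]
  rw [hvec] at hmain
  rw [← step1, ← hmain]

/-- a function on `ℂᴺ` invariant under `ξ ↦ e^{iθ} ξ A`, `A ∈ O(N,ℝ)`,
depends only on `Σ|ξ_j|²` and `|Σ ξ_j²|`. -/
theorem rotation_invariant_depends_on_r_s (N : ℕ) (hN : 2 ≤ N)
    (f : (Fin N → ℂ) → ℝ)
    (hinv : ∀ ξ : Fin N → ℂ, ∀ θ : ℝ, ∀ A ∈ Matrix.orthogonalGroup (Fin N) ℝ,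
      f (fun j => Complex.exp (θ * Complex.I) *
        Matrix.vecMul ξ (A.map (Complex.ofReal)) j) = f ξ) :
    ∀ ξ η : Fin N → ℂ,
      (∑ j, ‖ξ j‖ ^ 2 = ∑ j, ‖η j‖ ^ 2) →
      (‖∑ j, ξ j ^ 2‖ = ‖∑ j, η j ^ 2‖) →
      f ξ = f η := by
  intro ξ η h1 h2
  have h0 : (0 : ℕ) < N := by omega
  have h1' : (1 : ℕ) < N := by omega
  set i0 : Fin N := ⟨0, h0⟩ with hi0
  set i1 : Fin N := ⟨1, h1'⟩ with hi1
  have h01 : i0 ≠ i1 := by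
    intro h
    rw [Fin.ext_iff] at h
    simp [hi0, hi1] at h
  rw [aux_canonical f hinv i0 i1 h01 ξ, aux_canonical f hinv i0 i1 h01 η, h1, h2]
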